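/- Let α be a type of atoms, let P be a ground program over α, let F ⊆ α be a set of atoms (facts), and let F̂ denote the set of fact rules {a. : a ∈ F}. Let G = P ∪ F̂, and let T̄ be the monotone operator on subsets of G defined by T̄(R) = Inst(P, Heads(R)) ∪ F̂, where Inst(P, S) = {r ∈ P : B⁺(r) ⊆ S}. Then the least fixpoint of T̄ (with respect to set inclusion) equals the intersection of all embedding programs for G. -/
import Mathlib


structure GroundRule (α : Type*) where
  head : Set α
  posBody : Set α
  negBody : Set α

namespace GroundRule

variable {α : Type*}

/-- `Heads R` is the set of all head atoms of rules in `R`. -/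
def Heads (R : Set (GroundRule α)) : Set α := ⋃ r ∈ R, r.head

/-- `R` body-embeds `r` (written `R ⊢_b r`). -/
def BodyEmbeds (R : Set (GroundRule α)) (r : GroundRule α) : Prop :=
  ∀ a ∈ r.posBody, ∃ r' ∈ R, a ∈ r'.head

/-- `R` embeds `r` (written `R ⊢ r`): either `R` does not body-embed `r`,
or `R` head-embeds `r` (i.e. `r ∈ R`). -/
def Embeds (R : Set (GroundRule α)) (r : GroundRule α) : Prop :=
  ¬ BodyEmbeds R r ∨ r ∈ R

/-- `E` is an embedding program for the ground program `G`. -/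
def IsEmbeddingProgram (G E : Set (GroundRule α)) : Prop :=
  E ⊆ G ∧ ∀ r ∈ G, Embeds E r

/-- The fact rule `a.` for an atom `a`. -/
def factRule (a : α) : GroundRule α := ⟨{a}, ∅, ∅⟩

/-- `factRules F` is the set of fact rules `{a. : a ∈ F}`. -/
def factRules (F : Set α) : Set (GroundRule α) := factRule '' F

/-- The instantiation operator `Inst(P, S) = {r ∈ P : B⁺(r) ⊆ S}`. -/
def Inst (P : Set (GroundRule α)) (S : Set α) : Set (GroundRule α) :=
  {r ∈ P | r.posBody ⊆ S}

/-- Interpretation `I` satisfies the body of `r`. -/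
def SatBody (I : Set α) (r : GroundRule α) : Prop :=
  r.posBody ⊆ I ∧ r.negBody ∩ I = ∅

/-- Interpretation `I` satisfies the rule `r`. -/
def SatRule (I : Set α) (r : GroundRule α) : Prop :=
  ¬ SatBody I r ∨ (r.head ∩ I).Nonempty

/-- `I` is a model of the ground program `G`. -/
def IsModel (I : Set α) (G : Set (GroundRule α)) : Prop :=
  ∀ r ∈ G, SatRule I r

/-- FLP reduct `G^I = {r ∈ G : I ⊨ B(r)}`. -/
def reduct (G : Set (GroundRule α)) (I : Set α) : Set (GroundRule α) :=
  {r ∈ G | SatBody I r}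

/-- `A` is an answer set of `G`: `A` is a model of `G^A` minimal w.r.t. `⊆`. -/
def IsAnswerSet (G : Set (GroundRule α)) (A : Set α) : Prop :=
  IsModel A (reduct G A) ∧ ∀ B, B ⊂ A → ¬ IsModel B (reduct G A)

/-- `AS G` is the set of all answer sets of `G`. -/
def AS (G : Set (GroundRule α)) : Set (Set α) := {A | IsAnswerSet G A}

theorem Heads_mono {R R' : Set (GroundRule α)} (h : R ⊆ R') : Heads R ⊆ Heads R' := by
  intro a ha
  simp only [Heads, Set.mem_iUnion, exists_prop] at ha ⊢
  obtain ⟨r, hr, har⟩ := ha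
  exact ⟨r, h hr, har⟩

/-- The monotone operator `R ↦ Inst(P, Heads(R) ∪ F)`. -/
def InstOp (P : Set (GroundRule α)) (F : Set α) :
    Set (GroundRule α) →o Set (GroundRule α) where
  toFun R := Inst P (Heads R ∪ F)
  monotone' := fun _ _ h _ hr =>
    ⟨hr.1, hr.2.trans (Set.union_subset_union_left F (Heads_mono h))⟩

/-- `Inst^∞(P, F)`: the least fixpoint of `R ↦ Inst(P, Heads(R) ∪ F)`. -/
def InstInf (P : Set (GroundRule α)) (F : Set α) : Set (GroundRule α) :=
  OrderHom.lfp (InstOp P F)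

end GroundRule

open GroundRule

/-- The monotone operator `T̄(R) = Inst(P, Heads(R)) ∪ F̂`. -/
def TBar {α : Type*} (P : Set (GroundRule α)) (F : Set α) :
    Set (GroundRule α) →o Set (GroundRule α) where
  toFun R := Inst P (Heads R) ∪ factRules F
  monotone' := fun _ _ h =>
    Set.union_subset_union_left _ (fun _ hr => ⟨hr.1, hr.2.trans (Heads_mono h)⟩)

/-- the least fixpoint of `T̄` equals the intersection of all
embedding programs for `G = P ∪ F̂`. -/
theorem lfp_eq_sInter_embeddings {α : Type*} (P : Set (GroundRule α)) (F : Set α) :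
    OrderHom.lfp (TBar P F) =
      ⋂₀ {E | IsEmbeddingProgram (P ∪ factRules F) E} := by
  set L := OrderHom.lfp (TBar P F) with hL
  have hfix : TBar P F L = L := OrderHom.map_lfp (TBar P F)
  -- lfp is an embedding program
  have hEP : IsEmbeddingProgram (P ∪ factRules F) L := by
    constructor
    · intro r hr
      rw [← hfix] at hr
      rcases hr with hr | hr
      · exact Or.inl hr.1
      · exact Or.inr hr
    · intro r hr
      rcases hr with hr | hr
      · by_cases hb : BodyEmbeds L r
        · refine Or.inr ?_
          rw [← hfix]
          refine Or.inl ⟨hr, ?_⟩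
          intro a ha
          obtain ⟨r', hr', har⟩ := hb a ha
          exact Set.mem_biUnion hr' har
        · exact Or.inl hb
      · refine Or.inr ?_
        rw [← hfix]
        exact Or.inr hr
  apply le_antisymm
  · -- lfp ⊆ every embedding program, since each is a prefixpoint
    refine Set.subset_sInter fun E hE => ?_
    obtain ⟨hEG, hemb⟩ := hE
    refine OrderHom.lfp_le (TBar P F) ?_
    intro r hr
    rcases hr with hr | hr
    · have hG : r ∈ P ∪ factRules F := Or.inl hr.1
      rcases hemb r hG with hnb | hmem
      · exact absurd (fun a ha => by
          have := hr.2 ha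
          simpa [Heads, Set.mem_iUnion, exists_prop] using this) hnb
      · exact hmem
    · have hG : r ∈ P ∪ factRules F := Or.inr hr
      rcases hemb r hG with hnb | hmem
      · exfalso
        apply hnb
        intro a ha
        obtain ⟨b, _, rfl⟩ := hr
        simp [factRule] at ha
      · exact hmem
  · exact Set.sInter_subset_of_mem hEP
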